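/- (Cox orthogonalized marginalization) Suppose Xₜ = gₜ(āₜ₋₁, X̄ₜ₋₁) + εₜ with εₜ ~ N(0, σₜ²) independent, and the conditional survival function is P(Y ≥ t | Ā, X̄) = exp(−H₀(t) exp(βᵀĀ + λᵀX̃)) where X̃ₜ = Xₜ − gₜ and H₀ is a nonnegative nondecreasing function. Then the g-formula gives ψ(ā, t) = ∫ exp(−H₀(t) exp(βᵀā + z)) φ_{σ²}(z) dz, where φ_{σ²} is the N(0, σ²) density and σ² = Σₜ λₜ² σₜ². That is, the marginal survival curve is a Gaussian-frailty Cox model with the same coefficients β as the conditional model. -/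

import Mathlib

open MeasureTheory ProbabilityTheory
open scoped NNReal

open scoped Real in
lemma pdf_factor (v1 v2 : ℝ≥0) (hv1 : v1 ≠ 0) (hv2 : v2 ≠ 0) (z x : ℝ) :
    gaussianPDFReal 0 v1 x * gaussianPDFReal x v2 z
      = gaussianPDFReal 0 (v1 + v2) z *
        gaussianPDFReal ((v1 : ℝ) * z / ((v1 : ℝ) + v2)) (v1 * v2 / (v1 + v2)) x := by
  have h1 : (0:ℝ) < v1 := lt_of_le_of_ne (v1.coe_nonneg) (by exact_mod_cast (Ne.symm hv1))
  have h2 : (0:ℝ) < v2 := lt_of_le_of_ne (v2.coe_nonneg) (by exact_mod_cast (Ne.symm hv2))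
  have h12 : (0:ℝ) < (v1:ℝ) + v2 := by linarith
  have hw : ((v1 * v2 / (v1 + v2) : ℝ≥0) : ℝ) = (v1:ℝ) * v2 / ((v1:ℝ) + v2) := by push_cast; ring
  simp only [gaussianPDFReal, hw]
  rw [NNReal.coe_add]
  have hnorm : (√(2 * π * v1))⁻¹ * (√(2 * π * v2))⁻¹
      = (√(2 * π * ((v1:ℝ) + v2)))⁻¹ * (√(2 * π * ((v1:ℝ) * v2 / ((v1:ℝ) + v2))))⁻¹ := by
    rw [← mul_inv, ← mul_inv, ← Real.sqrt_mul (by positivity), ← Real.sqrt_mul (by positivity)]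
    congr 1
    field_simp
  have hexp : Real.exp (-(x - 0) ^ 2 / (2 * v1)) * Real.exp (-(z - x) ^ 2 / (2 * v2))
      = Real.exp (-(z - 0) ^ 2 / (2 * ((v1:ℝ) + v2))) *
        Real.exp (-(x - (v1:ℝ) * z / ((v1:ℝ) + v2)) ^ 2 / (2 * ((v1:ℝ) * v2 / ((v1:ℝ) + v2)))) := by
    rw [← Real.exp_add, ← Real.exp_add]
    congr 1
    field_simp
    ring
  calc (√(2 * π * v1))⁻¹ * Real.exp (-(x - 0) ^ 2 / (2 * v1)) *
        ((√(2 * π * v2))⁻¹ * Real.exp (-(z - x) ^ 2 / (2 * v2)))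
      = ((√(2 * π * v1))⁻¹ * (√(2 * π * v2))⁻¹) *
        (Real.exp (-(x - 0) ^ 2 / (2 * v1)) * Real.exp (-(z - x) ^ 2 / (2 * v2))) := by ring
    _ = _ := by rw [hnorm, hexp]; ring

lemma gaussian_conv (v1 v2 : ℝ≥0) :
    ((gaussianReal 0 v1).prod (gaussianReal 0 v2)).map (fun p : ℝ × ℝ => p.1 + p.2)
      = gaussianReal 0 (v1 + v2) := by
  by_cases hv1 : v1 = 0
  · subst hv1
    rw [gaussianReal_zero_var, Measure.dirac_prod, Measure.map_map (by fun_prop) (by fun_prop)]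
    simp [Function.comp_def]
  by_cases hv2 : v2 = 0
  · subst hv2
    rw [gaussianReal_zero_var, Measure.prod_dirac, Measure.map_map (by fun_prop) (by fun_prop)]
    simp [Function.comp_def]
  have hv12 : v1 + v2 ≠ 0 := by positivity
  have hw : v1 * v2 / (v1 + v2) ≠ 0 := by
    refine div_ne_zero (mul_ne_zero hv1 hv2) hv12
  ext s hs
  rw [Measure.map_apply (by fun_prop) hs,
    Measure.prod_apply (hs.preimage (by fun_prop))]
  have step1 : ∀ x : ℝ, gaussianReal 0 v2 (Prod.mk x ⁻¹' ((fun p : ℝ × ℝ => p.1 + p.2) ⁻¹' s))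
      = ∫⁻ z in s, gaussianPDF x v2 z := by
    intro x
    have : Prod.mk x ⁻¹' ((fun p : ℝ × ℝ => p.1 + p.2) ⁻¹' s) = (fun y => x + y) ⁻¹' s := rfl
    rw [this, ← Measure.map_apply (by fun_prop) hs, gaussianReal_map_const_add,
      zero_add, gaussianReal_apply _ hv2]
  simp_rw [step1]
  have hm2 : Measurable (Function.uncurry fun x z => gaussianPDF x v2 z) := by
    apply Measurable.ennreal_ofReal
    unfold gaussianPDFReal
    fun_prop
  rw [gaussianReal_of_var_ne_zero _ hv1,
    lintegral_withDensity_eq_lintegral_mul _ (measurable_gaussianPDF _ _)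
      (Measurable.lintegral_prod_right (f := fun x z => gaussianPDF x v2 z) hm2)]
  simp only [Pi.mul_apply]
  have swap : ∫⁻ x, gaussianPDF 0 v1 x * ∫⁻ z in s, gaussianPDF x v2 z ∂volume
      = ∫⁻ z in s, ∫⁻ x, gaussianPDF 0 v1 x * gaussianPDF x v2 z ∂volume := by
    have e1 : ∀ x : ℝ, gaussianPDF 0 v1 x * ∫⁻ z in s, gaussianPDF x v2 z
        = ∫⁻ z in s, gaussianPDF 0 v1 x * gaussianPDF x v2 z :=
      fun x => (lintegral_const_mul _ (measurable_gaussianPDF _ _)).symm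
    simp_rw [e1]
    exact lintegral_lintegral_swap
      (((measurable_gaussianPDF 0 v1).comp measurable_fst).mul hm2).aemeasurable
  rw [swap]
  have inner : ∀ z : ℝ, ∫⁻ x, gaussianPDF 0 v1 x * gaussianPDF x v2 z ∂volume
      = gaussianPDF 0 (v1 + v2) z := by
    intro z
    have : ∀ x, gaussianPDF 0 v1 x * gaussianPDF x v2 z
        = gaussianPDF 0 (v1 + v2) z *
          gaussianPDF ((v1 : ℝ) * z / ((v1 : ℝ) + v2)) (v1 * v2 / (v1 + v2)) x := by
      intro x
      simp only [gaussianPDF]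
      rw [← ENNReal.ofReal_mul (gaussianPDFReal_nonneg _ _ _),
        ← ENNReal.ofReal_mul (gaussianPDFReal_nonneg _ _ _), pdf_factor v1 v2 hv1 hv2 z x]
    simp_rw [this]
    rw [lintegral_const_mul _ (measurable_gaussianPDF _ _),
      lintegral_gaussianPDF_eq_one _ hw, mul_one]
  simp_rw [inner]
  rw [← gaussianReal_apply _ hv12 s]

noncomputable def sqNN (c : ℝ) : ℝ≥0 := ⟨c ^ 2, sq_nonneg _⟩

lemma pi_map_sum : ∀ (T : ℕ) (lam : Fin T → ℝ) (σt : Fin T → ℝ≥0),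
    (Measure.pi fun s => gaussianReal 0 (σt s ^ 2)).map (fun x => ∑ s, lam s * x s)
      = gaussianReal 0 (∑ s, sqNN (lam s) * σt s ^ 2) := by
  intro T
  induction T with
  | zero =>
    intro lam σt
    simp only [Finset.univ_eq_empty, Finset.sum_empty]
    rw [Measure.map_const, measure_univ, one_smul, gaussianReal_zero_var]
  | succ n ih =>
    intro lam σt
    have mp := measurePreserving_piFinSuccAbove (fun s : Fin (n+1) => gaussianReal 0 (σt s ^ 2)) 0
    have hpi : (Measure.pi fun s : Fin (n+1) => gaussianReal 0 (σt s ^ 2))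
        = ((gaussianReal 0 (σt 0 ^ 2)).prod
            (Measure.pi fun j : Fin n => gaussianReal 0 (σt ((0:Fin (n+1)).succAbove j) ^ 2))).map
          (MeasurableEquiv.piFinSuccAbove (fun _ => ℝ) 0).symm := (mp.symm _).map_eq.symm
    rw [hpi, Measure.map_map (by fun_prop) (MeasurableEquiv.measurable _)]
    have hfun : ((fun x : Fin (n+1) → ℝ => ∑ s, lam s * x s) ∘
          (MeasurableEquiv.piFinSuccAbove (fun _ => ℝ) 0).symm)
        = (fun p : ℝ × ℝ => p.1 + p.2) ∘
          (Prod.map (fun x : ℝ => lam 0 * x)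
            (fun y : Fin n → ℝ => ∑ j, lam ((0:Fin (n+1)).succAbove j) * y j)) := by
      ext p
      simp only [Function.comp_apply, MeasurableEquiv.piFinSuccAbove, MeasurableEquiv.symm_mk,
        MeasurableEquiv.coe_mk, Fin.insertNthEquiv, Equiv.symm_symm, Prod.map]
      rw [Fin.sum_univ_succAbove _ 0]
      simp [Fin.insertNth]
    rw [hfun, ← Measure.map_map (by fun_prop) (by fun_prop),
      ← Measure.map_prod_map _ _ (by fun_prop) (by fun_prop),
      gaussianReal_map_const_mul, mul_zero, ih, gaussian_conv,
      Fin.sum_univ_succAbove (fun s => sqNN (lam s) * σt s ^ 2) 0]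
    rfl

/-- Cox orthogonalized marginalization: with independent Gaussian
residuals εₜ ~ N(0, σₜ²) and conditional survival function
P(Y ≥ t | Ā, X̄) = exp(−H₀(t)exp(βᵀĀ + λᵀX̃)), the g-formula gives
ψ(ā,t) = ∫ exp(−H₀(t)exp(βᵀā + z)) dN(0,σ²)(z) with σ² = Σₜ λₜ²σₜ²:
a Gaussian-frailty Cox model with the same coefficients β. -/
theorem stmt11 {T : ℕ} (β lam : Fin T → ℝ) (σt : Fin T → ℝ≥0)
    (H0 : ℝ → ℝ) (hH0nonneg : ∀ t, 0 ≤ H0 t) (hH0mono : Monotone H0)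
    (σ2 : ℝ≥0) (hσ2 : (σ2 : ℝ) = ∑ t, (lam t) ^ 2 * ((σt t : ℝ)) ^ 2)
    (ψ : (Fin T → ℝ) → ℝ → ℝ)
    (hψ : ψ = fun a t =>
      ∫ x, Real.exp (-(H0 t) * Real.exp (∑ s, β s * a s + ∑ s, lam s * x s))
        ∂Measure.pi (fun s => gaussianReal 0 ((σt s) ^ 2))) :
    ∀ a t, ψ a t
      = ∫ z, Real.exp (-(H0 t) * Real.exp (∑ s, β s * a s + z)) ∂gaussianReal 0 σ2 := by
  intro a t
  have hσ2' : σ2 = ∑ s, sqNN (lam s) * σt s ^ 2 := by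
    apply NNReal.coe_injective
    rw [hσ2]
    push_cast [sqNN]
    rfl
  have hg : Measurable fun x : Fin T → ℝ => ∑ s, lam s * x s :=
    Finset.measurable_sum _ fun s _ => (measurable_pi_apply s).const_mul _
  have hf : Measurable fun z : ℝ => Real.exp (-(H0 t) * Real.exp (∑ s, β s * a s + z)) := by
    fun_prop
  rw [hψ, hσ2', ← pi_map_sum T lam σt,
    integral_map hg.aemeasurable hf.aestronglyMeasurable]
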